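/- Let k ≥ 2 and let G be a connected graph with 2·n(G) ≤ k. Then sg(K_k □ G) = k. -/

import Mathlib

open SimpleGraph



/-- A choice of one fixed shortest path (geodesic) between each pair of vertices,
symmetric in the sense that the path from `v` to `u` is the reverse of the one
from `u` to `v`. -/
def StrongGeodeticChoice {V : Type*} (G : SimpleGraph V) (p : ∀ u v : V, G.Walk u v) : Prop :=
  ∀ u v : V, (p u v).IsPath ∧ (p u v).length = G.dist u v ∧ p v u = (p u v).reverse

/-- `S` is a strong geodetic set of `G`: one can fix one shortest path between each
pair of vertices of `S` so that every vertex of `G` lies on some fixed path. -/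
def IsStrongGeodeticSet {V : Type*} (G : SimpleGraph V) (S : Set V) : Prop :=
  ∃ p : ∀ u v : V, G.Walk u v, StrongGeodeticChoice G p ∧
    ∀ w : V, ∃ u ∈ S, ∃ v ∈ S, w ∈ (p u v).support

/-- The strong geodetic number of `G`. -/
noncomputable def sg {V : Type*} (G : SimpleGraph V) : ℕ :=
  sInf {n | ∃ S : Set V, S.ncard = n ∧ IsStrongGeodeticSet G S}

/-- The strong geodetic core number of `G`: the minimum, over minimum strong
geodetic sets `S` together with a choice of fixed geodesics witnessing them,
of the size of a subset `X ⊆ S` such that the fixed paths with an endpoint in `X`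
already cover all vertices. -/
noncomputable def sgc {V : Type*} (G : SimpleGraph V) : ℕ :=
  sInf {k | ∃ (S X : Set V) (p : ∀ u v : V, G.Walk u v),
    StrongGeodeticChoice G p ∧ S.ncard = sg G ∧
    (∀ w : V, ∃ u ∈ S, ∃ v ∈ S, w ∈ (p u v).support) ∧
    X ⊆ S ∧ X.ncard = k ∧
    (∀ w : V, ∃ u ∈ X, ∃ v ∈ S, w ∈ (p u v).support)}

/-- `A` is a geodetic set: every vertex lies on some shortest path between two
vertices of `A`. -/
def IsGeodeticSet {V : Type*} (G : SimpleGraph V) (A : Set V) : Prop :=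
  ∀ w : V, ∃ u ∈ A, ∃ v ∈ A, ∃ q : G.Walk u v, q.length = G.dist u v ∧ w ∈ q.support

/-- The geodetic number of `G`. -/
noncomputable def geodeticNumber {V : Type*} (G : SimpleGraph V) : ℕ :=
  sInf {n | ∃ A : Set V, A.ncard = n ∧ IsGeodeticSet G A}

section AuxBox

open SimpleGraph

variable {α β : Type*} {K : SimpleGraph α} {H : SimpleGraph β}

lemma aux_dist_add_dist_le_length (hK : K.Connected) (hH : H.Connected)
    {x y : α × β} (p : (K □ H).Walk x y) :
    K.dist x.1 y.1 + H.dist x.2 y.2 ≤ p.length := by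
  induction p with
  | nil => simp
  | @cons a b c h q ih =>
    rcases SimpleGraph.boxProd_adj.mp h with ⟨ha, he⟩ | ⟨ha, he⟩
    · have h1 : K.dist a.1 c.1 ≤ K.dist a.1 b.1 + K.dist b.1 c.1 := hK.dist_triangle
      have h2 : K.dist a.1 b.1 ≤ 1 := by
        simpa using SimpleGraph.dist_le (SimpleGraph.Walk.cons ha SimpleGraph.Walk.nil)
      rw [SimpleGraph.Walk.length_cons, he]
      omega
    · have h1 : H.dist a.2 c.2 ≤ H.dist a.2 b.2 + H.dist b.2 c.2 := hH.dist_triangle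
      have h2 : H.dist a.2 b.2 ≤ 1 := by
        simpa using SimpleGraph.dist_le (SimpleGraph.Walk.cons ha SimpleGraph.Walk.nil)
      rw [SimpleGraph.Walk.length_cons, he]
      omega

lemma aux_support_fst_eq (hK : K.Connected) (hH : H.Connected)
    {x y : α × β} (p : (K □ H).Walk x y) :
    x.1 = y.1 → p.length ≤ H.dist x.2 y.2 → ∀ z ∈ p.support, z.1 = x.1 := by
  induction p with
  | nil =>
      intro _ _ z hz
      rw [SimpleGraph.Walk.support_nil, List.mem_singleton] at hz; rw [hz]
  | @cons a b c h q ih =>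
    intro hxy hlen z hz
    rw [SimpleGraph.Walk.support_cons, List.mem_cons] at hz
    rw [SimpleGraph.Walk.length_cons] at hlen
    rcases SimpleGraph.boxProd_adj.mp h with ⟨ha, he⟩ | ⟨ha, he⟩
    · exfalso
      have h1 := aux_dist_add_dist_le_length hK hH q
      have h2 : 0 < K.dist b.1 c.1 :=
        hK.pos_dist_of_ne (fun hbc => ha.ne (hxy.trans hbc.symm))
      rw [he] at hlen
      omega
    · have h2 : H.dist a.2 b.2 ≤ 1 := by
        simpa using SimpleGraph.dist_le (SimpleGraph.Walk.cons ha SimpleGraph.Walk.nil)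
      have h3 : H.dist a.2 c.2 ≤ H.dist a.2 b.2 + H.dist b.2 c.2 := hH.dist_triangle
      rcases hz with rfl | hz
      · rfl
      · have := ih (by rw [← he]; exact hxy) (by omega) z hz
        exact this.trans he.symm

lemma aux_support_fst (hK : K.Connected) (hH : H.Connected)
    {x y : α × β} (p : (K □ H).Walk x y) :
    p.length ≤ 1 + H.dist x.2 y.2 → ∀ z ∈ p.support, z.1 = x.1 ∨ z.1 = y.1 := by
  induction p with
  | nil =>
      intro _ z hz
      rw [SimpleGraph.Walk.support_nil, List.mem_singleton] at hz
      left; rw [hz]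
  | @cons a b c h q ih =>
    intro hlen z hz
    rw [SimpleGraph.Walk.support_cons, List.mem_cons] at hz
    rw [SimpleGraph.Walk.length_cons] at hlen
    rcases hz with rfl | hz
    · left; rfl
    rcases SimpleGraph.boxProd_adj.mp h with ⟨ha, he⟩ | ⟨ha, he⟩
    · by_cases hb : b.1 = c.1
      · right
        have := aux_support_fst_eq hK hH q hb (by rw [← he]; omega) z hz
        exact this.trans hb
      · exfalso
        have h1 := aux_dist_add_dist_le_length hK hH q
        have h2 : 0 < K.dist b.1 c.1 := hK.pos_dist_of_ne hb
        rw [he] at hlen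
        omega
    · have h2 : H.dist a.2 b.2 ≤ 1 := by
        simpa using SimpleGraph.dist_le (SimpleGraph.Walk.cons ha SimpleGraph.Walk.nil)
      have h3 : H.dist a.2 c.2 ≤ H.dist a.2 b.2 + H.dist b.2 c.2 := hH.dist_triangle
      rcases ih (by omega) z hz with hh | hh
      · left; exact hh.trans he.symm
      · right; exact hh

end AuxBox
def pvAux (n i t : ℕ) : ℕ :=
  if i < n then (if i < t then t else t + n)
  else if i < 2*n then (if i - n < t then t + n else t) else t

lemma pvAux_lt {n k : ℕ} (h2 : 2*n ≤ k) {i t : ℕ} (ht : t < n) : pvAux n i t < k := by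
  unfold pvAux; split_ifs <;> omega

lemma pvAux_mod {n : ℕ} (hn : 0 < n) {i t : ℕ} (ht : t < n) : pvAux n i t % n = t := by
  have h1 : t % n = t := Nat.mod_eq_of_lt ht
  have h2 : (t + n) % n = t := by rw [Nat.add_mod_right]; exact h1
  unfold pvAux; split_ifs <;> first | exact h1 | exact h2

lemma pvAux_excl {n i j : ℕ} (hn : 0 < n) (hrs : i % n ≠ j % n)
    (h1 : j = pvAux n i (j % n)) (h2 : i = pvAux n j (i % n)) : False := by
  have hjm : j % n < n := Nat.mod_lt _ hn
  have him : i % n < n := Nat.mod_lt _ hn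
  rcases Nat.lt_or_ge i n with hi | hi
  · have hr : i % n = i := Nat.mod_eq_of_lt hi
    rw [hr] at h2 hrs
    unfold pvAux at h1
    rw [if_pos hi] at h1
    split_ifs at h1 with hc
    · -- h1 : j = j % n
      have hj : j < n := by omega
      unfold pvAux at h2
      rw [if_pos hj] at h2
      split_ifs at h2 with hd <;> omega
    · -- h1 : j = j % n + n
      unfold pvAux at h2
      rw [if_neg (by omega), if_pos (by omega)] at h2
      split_ifs at h2 with hd <;> omega
  · rcases Nat.lt_or_ge i (2*n) with hi2 | hi2
    · have hr : i % n = i - n := by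
        rw [Nat.mod_eq_sub_mod hi]; exact Nat.mod_eq_of_lt (by omega)
      rw [hr] at h2 hrs
      unfold pvAux at h1
      rw [if_neg (by omega), if_pos hi2] at h1
      split_ifs at h1 with hc
      · -- h1 : j = j % n + n
        unfold pvAux at h2
        rw [if_neg (by omega), if_pos (by omega)] at h2
        split_ifs at h2 with hd <;> omega
      · -- h1 : j = j % n
        unfold pvAux at h2
        rw [if_pos (by omega)] at h2
        split_ifs at h2 with hd <;> omega
    · unfold pvAux at h1
      rw [if_neg (by omega), if_neg (by omega)] at h1
      have hj : j < n := by omega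
      unfold pvAux at h2
      rw [if_pos hj] at h2
      split_ifs at h2 with hd <;> omega
section AuxCons

open SimpleGraph

variable {V' : Type*} {W : Type*} [Fintype W] [Nonempty W]

/-- a fixed geodesic between any two vertices of a connected graph -/
noncomputable def auxGeo {Γ : SimpleGraph V'} (hΓ : Γ.Connected) (u v : V') : Γ.Walk u v :=
  (hΓ.exists_walk_length_eq_dist u v).choose

lemma auxGeo_length {Γ : SimpleGraph V'} (hΓ : Γ.Connected) (u v : V') :
    (auxGeo hΓ u v).length = Γ.dist u v :=
  (hΓ.exists_walk_length_eq_dist u v).choose_spec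

variable (G : SimpleGraph W) (k : ℕ)

/-- the chosen vertex of `W` in each layer -/
noncomputable def auxF (i : Fin k) : W :=
  (Fintype.equivFin W).symm ⟨i.val % Fintype.card W, Nat.mod_lt _ Fintype.card_pos⟩

/-- the special geodesic from `(i, f i)` to `(j, f j)` routed through layer `i` -/
noncomputable def auxSp (hG : G.Connected) {i j : Fin k} (hij : i ≠ j) :
    ((⊤ : SimpleGraph (Fin k)) □ G).Walk (i, auxF (W := W) k i) (j, auxF (W := W) k j) :=
  ((auxGeo hG (auxF (W := W) k i) (auxF (W := W) k j)).boxProdRight ⊤ i).concat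
    (SimpleGraph.boxProd_adj.mpr (Or.inl ⟨(SimpleGraph.top_adj i j).mpr hij, rfl⟩))

lemma auxSp_length (hG : G.Connected) {i j : Fin k} (hij : i ≠ j) :
    (auxSp G k hG hij).length = G.dist (auxF (W := W) k i) (auxF (W := W) k j) + 1 := by
  erw [auxSp, SimpleGraph.Walk.length_concat, SimpleGraph.Walk.boxProdRight,
    SimpleGraph.Walk.length_map, auxGeo_length]

lemma auxSp_mem (hG : G.Connected) {i j : Fin k} (hij : i ≠ j) :
    (i, auxF (W := W) k j) ∈ (auxSp G k hG hij).support := by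
  rw [auxSp, SimpleGraph.Walk.concat_eq_append]
  rw [SimpleGraph.Walk.mem_support_append_iff]
  left
  erw [SimpleGraph.Walk.boxProdRight, SimpleGraph.Walk.support_map]
  exact List.mem_map_of_mem (SimpleGraph.Walk.end_mem_support _)

/-- the routing relation: the pair `{i,j}` is routed through layer `i` -/
def auxR (i j : Fin k) : Prop :=
  j.val % Fintype.card W ≠ i.val % Fintype.card W ∧
    j.val = pvAux (Fintype.card W) i.val (j.val % Fintype.card W)

/-- the chosen geodesic between `(i, f i)` and `(j, f j)` -/
noncomputable def auxSpecial (hG : G.Connected) {i j : Fin k} (hij : i ≠ j) :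
    ((⊤ : SimpleGraph (Fin k)) □ G).Walk (i, auxF (W := W) k i) (j, auxF (W := W) k j) :=
  @ite _ (auxR (W := W) k i j) (Classical.propDecidable _)
    (auxSp G k hG hij) ((auxSp G k hG (Ne.symm hij)).reverse)

/-- the full choice of geodesics -/
noncomputable def auxP (hG : G.Connected) (hP : ((⊤ : SimpleGraph (Fin k)) □ G).Connected)
    (u v : Fin k × W) : ((⊤ : SimpleGraph (Fin k)) □ G).Walk u v :=
  @dite _ (u.2 = auxF (W := W) k u.1 ∧ v.2 = auxF (W := W) k v.1 ∧ u.1 ≠ v.1)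
    (Classical.propDecidable _)
    (fun h => (auxSpecial G k hG h.2.2).copy (by rw [← h.1]) (by rw [← h.2.1]))
    (fun _ => auxGeo hP u v)

lemma aux_layer_dist_le (hG : G.Connected) (a : Fin k) (u v : W) :
    ((⊤ : SimpleGraph (Fin k)) □ G).dist (a, u) (a, v) ≤ G.dist u v := by
  have := SimpleGraph.dist_le ((auxGeo hG u v).boxProdRight (⊤ : SimpleGraph (Fin k)) a)
  erw [SimpleGraph.Walk.boxProdRight, SimpleGraph.Walk.length_map, auxGeo_length] at this; exact this

lemma aux_boxProd_dist (hG : G.Connected) {a b : Fin k} (hab : a ≠ b) (u v : W) :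
    ((⊤ : SimpleGraph (Fin k)) □ G).dist (a, u) (b, v) = 1 + G.dist u v := by
  have hKc : (⊤ : SimpleGraph (Fin k)).Connected := @SimpleGraph.connected_top _ ⟨a⟩
  refine le_antisymm ?_ ?_
  · have hadj : ((⊤ : SimpleGraph (Fin k)) □ G).Adj (a, v) (b, v) :=
      SimpleGraph.boxProd_adj.mpr (Or.inl ⟨(SimpleGraph.top_adj a b).mpr hab, rfl⟩)
    have := SimpleGraph.dist_le (((auxGeo hG u v).boxProdRight ⊤ a).concat hadj)
    erw [SimpleGraph.Walk.length_concat, SimpleGraph.Walk.boxProdRight,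
      SimpleGraph.Walk.length_map, auxGeo_length, Nat.add_comm] at this; exact this
  · obtain ⟨p, hp⟩ := (hKc.boxProd hG).exists_walk_length_eq_dist (a, u) (b, v)
    have h1 := aux_dist_add_dist_le_length hKc hG p
    have h2 : (⊤ : SimpleGraph (Fin k)).dist a b = 1 := SimpleGraph.dist_top_of_ne hab
    dsimp only at h1
    rw [hp, h2] at h1
    exact h1

lemma auxP_length (hG : G.Connected) (hP : ((⊤ : SimpleGraph (Fin k)) □ G).Connected)
    (u v : Fin k × W) :
    (auxP G k hG hP u v).length = ((⊤ : SimpleGraph (Fin k)) □ G).dist u v := by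
  obtain ⟨a, x⟩ := u
  obtain ⟨b, y⟩ := v
  rw [auxP]
  split_ifs with h
  · obtain ⟨h1, h2, h3⟩ := h
    dsimp only at h1 h2 h3
    subst h1; subst h2
    rw [SimpleGraph.Walk.length_copy, auxSpecial]
    split_ifs with hR
    · rw [auxSp_length, aux_boxProd_dist G k hG h3, Nat.add_comm]
    · rw [SimpleGraph.Walk.length_reverse, auxSp_length,
        aux_boxProd_dist G k hG h3, SimpleGraph.dist_comm, Nat.add_comm]
  · exact auxGeo_length hP _ _

end AuxCons

section AuxMore
open SimpleGraph
variable {W : Type*} [Fintype W] [Nonempty W] (G : SimpleGraph W) (k : ℕ)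

lemma auxF_eq (j : Fin k) {x : W}
    (hmod : j.val % Fintype.card W = ((Fintype.equivFin W) x).val) :
    auxF (W := W) k j = x := by
  unfold auxF
  have h1 : (⟨j.val % Fintype.card W, Nat.mod_lt _ Fintype.card_pos⟩ : Fin (Fintype.card W))
      = Fintype.equivFin W x := Fin.ext hmod
  rw [h1, Equiv.symm_apply_apply]

lemma auxP_cover (hG : G.Connected) (hP : ((⊤ : SimpleGraph (Fin k)) □ G).Connected)
    {i j : Fin k} (hij : i ≠ j) (hR : auxR (W := W) k i j)
    (hnR : ¬ auxR (W := W) k j i) :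
    (i, auxF (W := W) k j) ∈
      (auxP G k hG hP (i, auxF (W := W) k i) (j, auxF (W := W) k j)).support ∧
    (i, auxF (W := W) k j) ∈
      (auxP G k hG hP (j, auxF (W := W) k j) (i, auxF (W := W) k i)).support := by
  constructor
  · unfold auxP
    rw [dif_pos (⟨rfl, rfl, hij⟩ : _ ∧ _ ∧ _)]
    rw [SimpleGraph.Walk.support_copy]
    unfold auxSpecial
    rw [if_pos hR]
    exact auxSp_mem G k hG hij
  · unfold auxP
    rw [dif_pos (⟨rfl, rfl, Ne.symm hij⟩ : _ ∧ _ ∧ _)]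
    rw [SimpleGraph.Walk.support_copy]
    unfold auxSpecial
    rw [if_neg hnR, SimpleGraph.Walk.support_reverse, List.mem_reverse]
    exact auxSp_mem G k hG hij

end AuxMore

theorem stmt16 {W : Type*} [Fintype W] (k : ℕ) (hk : 2 ≤ k)
    (G : SimpleGraph W) (hG : G.Connected) (h : 2 * Fintype.card W ≤ k) :
    sg (completeGraph (Fin k) □ G) = k := by
  classical
  haveI hW : Nonempty W := hG.nonempty
  rw [completeGraph_eq_top]
  haveI : Nonempty (Fin k) := ⟨⟨0, by omega⟩⟩
  set n := Fintype.card W with hn_def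
  have hn : 0 < n := Fintype.card_pos
  have hKc : (⊤ : SimpleGraph (Fin k)).Connected := SimpleGraph.connected_top
  have hPc : ((⊤ : SimpleGraph (Fin k)) □ G).Connected := hKc.boxProd hG
  -- the strong geodetic set
  set S : Set (Fin k × W) := Set.range (fun i : Fin k => (i, auxF (W := W) k i)) with hS_def
  have hScard : S.ncard = k := by
    rw [hS_def, ← Set.image_univ]
    rw [Set.ncard_image_of_injective _
      (fun i j hij => (congrArg Prod.fst hij : i = j))]
    rw [Set.ncard_univ, Nat.card_eq_fintype_card, Fintype.card_fin]
  -- the choice of geodesics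
  set ε := Fintype.equivFin (Fin k × W) with hε_def
  set p : ∀ u v : Fin k × W, ((⊤ : SimpleGraph (Fin k)) □ G).Walk u v :=
    fun u v => if ε u ≤ ε v then auxP G k hG hPc u v
      else (auxP G k hG hPc v u).reverse with hp_def
  have hplen : ∀ u v, (p u v).length = ((⊤ : SimpleGraph (Fin k)) □ G).dist u v := by
    intro u v
    simp only [hp_def]
    split_ifs with h1
    · exact auxP_length G k hG hPc u v
    · rw [SimpleGraph.Walk.length_reverse, auxP_length, SimpleGraph.dist_comm]
  have hchoice : StrongGeodeticChoice ((⊤ : SimpleGraph (Fin k)) □ G) p := by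
    intro u v
    refine ⟨SimpleGraph.Walk.isPath_of_length_eq_dist _ (hplen u v), hplen u v, ?_⟩
    by_cases h1 : ε u ≤ ε v <;> by_cases h2 : ε v ≤ ε u
    · have huv : u = v := ε.injective (le_antisymm h1 h2)
      subst huv
      simp only [hp_def, if_pos h1]
      have h0 : (auxP G k hG hPc u u).length = 0 := by
        rw [auxP_length]; exact SimpleGraph.dist_self
      rw [SimpleGraph.Walk.eq_nil_iff_nil.mpr (SimpleGraph.Walk.length_eq_zero_iff.mp h0)]
      simp
    · simp only [hp_def, if_pos h1, if_neg h2]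
    · simp only [hp_def, if_pos h2, if_neg h1]
      exact (SimpleGraph.Walk.reverse_reverse _).symm
    · rcases le_total (ε u) (ε v) with hh | hh
      · exact absurd hh h1
      · exact absurd hh h2
  have hcov : ∀ w : Fin k × W, ∃ u ∈ S, ∃ v ∈ S, w ∈ (p u v).support := by
    rintro ⟨i, x⟩
    by_cases hx : x = auxF (W := W) k i
    · subst hx
      exact ⟨(i, auxF (W := W) k i), ⟨i, rfl⟩, (i, auxF (W := W) k i), ⟨i, rfl⟩,
        SimpleGraph.Walk.start_mem_support _⟩
    · set t : Fin n := Fintype.equivFin W x with ht_def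
      have htlt : t.val < n := t.isLt
      have hjlt : pvAux n i.val t.val < k := pvAux_lt h htlt
      set j : Fin k := ⟨pvAux n i.val t.val, hjlt⟩ with hj_def
      have hjmod : j.val % n = t.val := pvAux_mod hn htlt
      have hfj : auxF (W := W) k j = x := auxF_eq k j hjmod
      have hti : t.val ≠ i.val % n := fun hEq => hx (auxF_eq k i hEq.symm).symm
      have hR : auxR (W := W) k i j := by
        refine ⟨?_, ?_⟩
        · rw [hjmod]; exact hti
        · rw [hjmod]
      have hij : i ≠ j := fun hEq => hR.1 (by rw [hEq])
      have hnR : ¬ auxR (W := W) k j i := fun hR' => pvAux_excl hn (Ne.symm hR.1) hR.2 hR'.2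
      have hcover := auxP_cover G k hG hPc hij hR hnR
      rw [← hfj]
      rcases le_total (ε (i, auxF (W := W) k i)) (ε (j, auxF (W := W) k j)) with hle | hle
      · refine ⟨(i, auxF (W := W) k i), ⟨i, rfl⟩, (j, auxF (W := W) k j), ⟨j, rfl⟩, ?_⟩
        simp only [hp_def, if_pos hle]
        exact hcover.1
      · refine ⟨(j, auxF (W := W) k j), ⟨j, rfl⟩, (i, auxF (W := W) k i), ⟨i, rfl⟩, ?_⟩
        simp only [hp_def, if_pos hle]
        exact hcover.2
  have hmemk : k ∈ {m | ∃ T : Set (Fin k × W), T.ncard = m ∧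
      IsStrongGeodeticSet ((⊤ : SimpleGraph (Fin k)) □ G) T} :=
    ⟨S, hScard, p, hchoice, hcov⟩
  have hlb : ∀ m ∈ {m | ∃ T : Set (Fin k × W), T.ncard = m ∧
      IsStrongGeodeticSet ((⊤ : SimpleGraph (Fin k)) □ G) T}, k ≤ m := by
    rintro m ⟨T, hTcard, hT⟩
    obtain ⟨q, hqchoice, hqcov⟩ := hT
    have hsub : (Set.univ : Set (Fin k)) ⊆ Prod.fst '' T := by
      rintro i -
      have w0 : W := hW.some
      obtain ⟨u, hu, v, hv, hmem⟩ := hqcov (i, w0)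
      obtain ⟨a, x⟩ := u; obtain ⟨b, y⟩ := v
      obtain ⟨-, hlen, -⟩ := hqchoice (a, x) (b, y)
      rcases eq_or_ne a b with rfl | hne
      · have hfst := aux_support_fst_eq hKc hG (q (a,x) (a,y)) rfl
          (by rw [hlen]; exact aux_layer_dist_le G k hG a x y) _ hmem
        exact ⟨(a, x), hu, hfst.symm⟩
      · have hfst := aux_support_fst hKc hG (q (a,x) (b,y))
          (by rw [hlen]; exact le_of_eq (aux_boxProd_dist G k hG hne x y)) _ hmem
        rcases hfst with h' | h'
        · exact ⟨(a, x), hu, h'.symm⟩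
        · exact ⟨(b, y), hv, h'.symm⟩
    calc k = (Set.univ : Set (Fin k)).ncard := by
            rw [Set.ncard_univ, Nat.card_eq_fintype_card, Fintype.card_fin]
      _ ≤ (Prod.fst '' T).ncard := Set.ncard_le_ncard hsub (T.toFinite.image _)
      _ ≤ T.ncard := Set.ncard_image_le T.toFinite
      _ = m := hTcard
  unfold sg
  exact le_antisymm (Nat.sInf_le hmemk) (le_csInf ⟨k, hmemk⟩ hlb)
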